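/- arXiv:2412.06633 — 3 statements merged into one kernel-verified Lean document; each statement's English description precedes it below -/
import Mathlib

section
/- Let U be a k-dimensional subspace of ℝ^n, let α_1, …, α_m span ℝ^n, let β_i = Proj_U α_i, and let H_i = {v : ⟨α_i, v⟩ = 0}. For a k-subset I ⊆ [m], the family {β_i : i ∈ I} is linearly independent if and only if U ⊕ ⋂_{i∈I} H_i = ℝ^n. -/
open scoped RealInnerProductSpace

lemma mem_orthogonal_span_iff {E : Type*} [NormedAddCommGroup E] [InnerProductSpace ℝ E]
    {s : Set E} {v : E} :
    v ∈ (Submodule.span ℝ s)ᗮ ↔ ∀ u ∈ s, ⟪u, v⟫ = 0 := by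
  constructor
  · intro h u hu
    exact h u (Submodule.subset_span hu)
  · intro h
    intro u hu
    have hle : Submodule.span ℝ s ≤ (ℝ ∙ v)ᗮ := by
      rw [Submodule.span_le]
      intro x hx
      exact Submodule.mem_orthogonal_singleton_iff_inner_left.mpr (h x hx)
    exact Submodule.mem_orthogonal_singleton_iff_inner_left.mp (hle hu)

/-- For a `k`-subset `I ⊆ [m]`, the projections `{βᵢ : i ∈ I}` are linearly
independent iff `U ⊕ ⋂_{i∈I} Hᵢ = ℝ^n`. -/
theorem stmt9 {n m k : ℕ} (U : Submodule ℝ (EuclideanSpace ℝ (Fin n)))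
    (hU : Module.finrank ℝ U = k)
    (α β : Fin m → EuclideanSpace ℝ (Fin n))
    (hα : Submodule.span ℝ (Set.range α) = ⊤)
    (hβ : ∀ i, β i = (U.orthogonalProjectionOnto (α i) : EuclideanSpace ℝ (Fin n)))
    (H : Fin m → Submodule ℝ (EuclideanSpace ℝ (Fin n)))
    (hH : ∀ i v, v ∈ H i ↔ ⟪α i, v⟫ = 0)
    (I : Finset (Fin m)) (hI : I.card = k) :
    LinearIndependent ℝ (fun i : I => β i.1) ↔ IsCompl U (⨅ i ∈ I, H i) := by
  classical
  set W : Submodule ℝ (EuclideanSpace ℝ (Fin n)) := Submodule.span ℝ (Set.range fun i : I => α i.1) with hW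
  set S : Submodule ℝ (EuclideanSpace ℝ (Fin n)) := Submodule.span ℝ (Set.range fun i : I => β i.1) with hS
  have hn : Module.finrank ℝ (EuclideanSpace ℝ (Fin n)) = n := finrank_euclideanSpace_fin
  have hkn : k ≤ n := by
    have h1 : Module.finrank ℝ U ≤ Module.finrank ℝ (EuclideanSpace ℝ (Fin n)) :=
      U.finrank_le
    omega
  have hcard : Fintype.card I = k := by rw [Fintype.card_coe, hI]
  -- the intersection of the hyperplanes is Wᗮ
  have hHW : (⨅ i ∈ I, H i) = Wᗮ := by
    ext v
    simp only [Submodule.mem_iInf, hH, hW, mem_orthogonal_span_iff]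
    constructor
    · rintro h _ ⟨i, rfl⟩
      exact h i.1 i.2
    · intro h i hi
      exact h _ ⟨⟨i, hi⟩, rfl⟩
  -- key: for v ∈ U, ⟪α i, v⟫ = ⟪β i, v⟫
  have key : ∀ v ∈ U, ∀ i : Fin m, ⟪α i, v⟫ = ⟪β i, v⟫ := by
    intro v hv i
    rw [hβ i, ← Submodule.starProjection_apply, Submodule.inner_starProjection_left_eq_right,
      Submodule.starProjection_eq_self_iff.mpr hv]
  have hSU : S ≤ U := by
    rw [hS, Submodule.span_le]
    rintro _ ⟨i, rfl⟩
    show β i.1 ∈ (U : Set _)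
    rw [hβ]
    exact Submodule.coe_mem _
  -- U ⊓ Wᗮ = U ⊓ Sᗮ
  have hinf : U ⊓ Wᗮ = U ⊓ Sᗮ := by
    ext v
    simp only [Submodule.mem_inf, hW, hS, mem_orthogonal_span_iff]
    constructor
    · rintro ⟨hv, h⟩
      refine ⟨hv, ?_⟩
      rintro _ ⟨i, rfl⟩
      rw [← key v hv]
      exact h _ ⟨i, rfl⟩
    · rintro ⟨hv, h⟩
      refine ⟨hv, ?_⟩
      rintro _ ⟨i, rfl⟩
      rw [key v hv]
      exact h _ ⟨i, rfl⟩
  rw [hHW]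
  constructor
  · intro h
    -- α restricted to I is independent
    have hαind : LinearIndependent ℝ (fun i : I => α i.1) := by
      apply LinearIndependent.of_comp
        (U.subtype ∘ₗ (U.orthogonalProjectionOnto : EuclideanSpace ℝ (Fin n) →ₗ[ℝ] U))
      convert h using 1
      funext i
      simp [hβ]
    have hWrank : Module.finrank ℝ W = k := by
      rw [hW, finrank_span_eq_card hαind, hcard]
    have hSrank : Module.finrank ℝ S = k := by
      rw [hS, finrank_span_eq_card h, hcard]
    have hSeq : S = U := Submodule.eq_of_le_of_finrank_eq hSU (by rw [hSrank, hU])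
    have hdisj : Disjoint U Wᗮ := by
      rw [disjoint_iff, hinf, ← hSeq, Submodule.inf_orthogonal_eq_bot]
    have hWorthrank : Module.finrank ℝ Wᗮ = n - k := by
      have := W.finrank_add_finrank_orthogonal
      rw [hWrank, hn] at this
      omega
    refine ⟨hdisj, codisjoint_iff.mpr ?_⟩
    apply Submodule.eq_top_of_disjoint
    · rw [hU, hWorthrank, hn]; omega
    · exact hdisj
  · intro h
    -- from disjointness, U ⊓ Sᗮ = ⊥
    have hdisjS : Disjoint U Sᗮ := by
      rw [disjoint_iff, ← hinf, ← disjoint_iff]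
      exact h.disjoint
    have hle : Module.finrank ℝ U + Module.finrank ℝ Sᗮ ≤ n := by
      have := Submodule.finrank_add_finrank_le_of_disjoint hdisjS
      omega
    have hSorth := S.finrank_add_finrank_orthogonal
    rw [hn] at hSorth
    have hScard : Module.finrank ℝ S ≤ k := by
      rw [hS, ← hcard]
      exact finrank_range_le_card _
    have hSrank : Module.finrank ℝ S = k := by omega
    rw [linearIndependent_iff_card_eq_finrank_span, hcard, Set.finrank, ← hS, hSrank]
end

section
/- Let U ∈ Gr(k,n) over a field F, X a subspace of dimension n−k with matrix representative A_X, and define a_I(X) = (−1)^{k(k+1)/2 + Σ_{i∈I} i} Δ_{[n]∖I}(A_X) for each k-subset I of [n]. Then F^n = U ⊕ X if and only if Σ_{I} a_I(X) · Δ_I(A_U) ≠ 0, where A_U is any matrix representative of U. -/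
open Matrix

/-- The maximal minor of a matrix `A` with `r` rows on the column set `S`
(taken in increasing order); defined to be `0` if `S` does not have `r` elements. -/
noncomputable def minor {F : Type*} [Field F] {r N : ℕ} (A : Matrix (Fin r) (Fin N) F)
    (S : Finset (Fin N)) : F :=
  if h : S.card = r then (A.submatrix id (fun j => (S.orderIsoOfFin h j : Fin N))).det else 0

namespace Stmt11Aux

open Finset Equiv


variable {n k l : ℕ}

/-- The index equivalence `Fin k ⊕ Fin l ≃ Fin n`. -/
def eAux (hn : k + l = n) : (Fin k ⊕ Fin l) ≃ Fin n := finSumFinEquiv.trans (finCongr hn)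

lemma eAux_inl (hn : k + l = n) (t : Fin k) : ((eAux hn (Sum.inl t) : Fin n) : ℕ) = t := by
  simp [eAux]

lemma eAux_inr (hn : k + l = n) (s : Fin l) : ((eAux hn (Sum.inr s) : Fin n) : ℕ) = k + s := by
  simp [eAux]

/-- The equivalence sending `Fin k` order-isomorphically to `I` and `Fin l` to `Iᶜ`. -/
noncomputable def dAux (I : Finset (Fin n)) (hI : I.card = k) (hI' : Iᶜ.card = l) :
    (Fin k ⊕ Fin l) ≃ Fin n :=
  Equiv.ofBijective
    (Sum.elim (fun t => I.orderEmbOfFin hI t) (fun s => Iᶜ.orderEmbOfFin hI' s)) (by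
    rw [Fintype.bijective_iff_injective_and_card]
    constructor
    · rintro (t | s) (u | v) h <;>
        simp only [Sum.elim_inl, Sum.elim_inr] at h
      · exact congrArg Sum.inl ((I.orderEmbOfFin hI).injective h)
      · exact absurd (h ▸ I.orderEmbOfFin_mem hI t)
          (Finset.mem_compl.mp (Iᶜ.orderEmbOfFin_mem hI' v))
      · exact absurd (h ▸ I.orderEmbOfFin_mem hI u)
          (Finset.mem_compl.mp (Iᶜ.orderEmbOfFin_mem hI' s))
      · exact congrArg Sum.inr ((Iᶜ.orderEmbOfFin hI').injective h)
    · have := Finset.card_add_card_compl I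
      simp only [Fintype.card_fin] at this
      simp [hI, hI', ← this])

lemma dAux_inl (I : Finset (Fin n)) (hI : I.card = k) (hI' : Iᶜ.card = l) (t : Fin k) :
    dAux I hI hI' (Sum.inl t) = I.orderEmbOfFin hI t := rfl

lemma dAux_inr (I : Finset (Fin n)) (hI : I.card = k) (hI' : Iᶜ.card = l) (s : Fin l) :
    dAux I hI hI' (Sum.inr s) = Iᶜ.orderEmbOfFin hI' s := rfl

/-- The permutation of `Fin n` sending `I` (in increasing order) to the first `k`
positions and `Iᶜ` to the last `l` positions. -/
noncomputable def sepPerm (hn : k + l = n) (I : Finset (Fin n)) (hI : I.card = k)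
    (hI' : Iᶜ.card = l) : Equiv.Perm (Fin n) :=
  (dAux I hI hI').symm.trans (eAux hn)

lemma sepPerm_apply_mem (hn : k + l = n) (I : Finset (Fin n)) (hI : I.card = k)
    (hI' : Iᶜ.card = l) (t : Fin k) :
    sepPerm hn I hI hI' (I.orderEmbOfFin hI t) = eAux hn (Sum.inl t) := by
  rw [sepPerm, Equiv.trans_apply, ← dAux_inl I hI hI', Equiv.symm_apply_apply]

lemma sepPerm_apply_not_mem (hn : k + l = n) (I : Finset (Fin n)) (hI : I.card = k)
    (hI' : Iᶜ.card = l) (s : Fin l) :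
    sepPerm hn I hI hI' (Iᶜ.orderEmbOfFin hI' s) = eAux hn (Sum.inr s) := by
  rw [sepPerm, Equiv.trans_apply, ← dAux_inr I hI hI', Equiv.symm_apply_apply]

lemma filter_lt_eq_image (c : ℕ) (h : c ≤ n) :
    (univ.filter (fun x : Fin n => (x : ℕ) < c)) = (univ : Finset (Fin c)).image (Fin.castLE h) := by
  ext x
  simp only [mem_filter, mem_univ, true_and, mem_image]
  constructor
  · intro hx; exact ⟨⟨(x : ℕ), hx⟩, rfl⟩
  · rintro ⟨a, rfl⟩; exact a.2

lemma card_filter_lt (c : ℕ) (h : c ≤ n) :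
    (univ.filter (fun x : Fin n => (x : ℕ) < c)).card = c := by
  rw [filter_lt_eq_image c h, Finset.card_image_of_injective _ (Fin.castLE_injective h)]
  simp

lemma sum_filter_lt (c : ℕ) (h : c ≤ n) :
    (∑ i ∈ univ.filter (fun x : Fin n => (x : ℕ) < c), (i : ℕ)) = c * (c - 1) / 2 := by
  rw [filter_lt_eq_image c h, Finset.sum_image (fun a _ b _ hab => Fin.castLE_injective h hab)]
  simp only [Fin.coe_castLE]
  rw [Fin.sum_univ_eq_sum_range (fun i => i) c, Finset.sum_range_id]

lemma sign_sepPerm (hn : k + l = n) : ∀ (m : ℕ) (I : Finset (Fin n)) (hI : I.card = k)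
    (hI' : Iᶜ.card = l), (∑ i ∈ I, (i : ℕ)) = m →
    Equiv.Perm.sign (sepPerm hn I hI hI') = (-1) ^ (m + k * (k - 1) / 2) := by
  intro m
  induction m using Nat.strong_induction_on with
  | _ m IH =>
    intro I hI hI' hm
    by_cases hex : ∃ a ∈ I, ∃ b : Fin n, (b : ℕ) + 1 = (a : ℕ) ∧ b ∉ I
    · obtain ⟨a, haI, b, hba, hbI⟩ := hex
      have hab : b ≠ a := fun h => by rw [h] at hba; omega
      have hbJ : b ∉ I.erase a := fun h => hbI (Finset.mem_of_mem_erase h)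
      have hk1 : 1 ≤ k := hI ▸ Finset.card_pos.mpr ⟨a, haI⟩
      set J := insert b (I.erase a) with hJdef
      have hJcard : J.card = k := by
        rw [hJdef, Finset.card_insert_of_notMem hbJ, Finset.card_erase_of_mem haI, hI]
        omega
      have hJ' : Jᶜ.card = l := by
        have h1 := Finset.card_add_card_compl I
        have h2 := Finset.card_add_card_compl J
        rw [hI, hI'] at h1; rw [hJcard] at h2; omega
      -- the order embedding of J is swap ∘ (order embedding of I)
      have key1 : ∀ t : Fin k, J.orderEmbOfFin hJcard t = Equiv.swap b a (I.orderEmbOfFin hI t) := by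
        have hu := Finset.orderEmbOfFin_unique hJcard
          (f := fun t => Equiv.swap b a (I.orderEmbOfFin hI t)) ?_ ?_
        · exact fun t => (congrFun hu t).symm
        · intro t
          show Equiv.swap b a (I.orderEmbOfFin hI t) ∈ J
          have hvI := I.orderEmbOfFin_mem hI t
          by_cases hva : I.orderEmbOfFin hI t = a
          · rw [hva, Equiv.swap_apply_right]; exact Finset.mem_insert_self _ _
          · rw [Equiv.swap_apply_of_ne_of_ne (fun h => hbI (by rwa [h] at hvI)) hva]
            exact Finset.mem_insert_of_mem (Finset.mem_erase.mpr ⟨hva, hvI⟩)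
        · intro t u htu
          show Equiv.swap b a (I.orderEmbOfFin hI t) < Equiv.swap b a (I.orderEmbOfFin hI u)
          have hvw : I.orderEmbOfFin hI t < I.orderEmbOfFin hI u :=
            (I.orderEmbOfFin hI).strictMono htu
          set v := I.orderEmbOfFin hI t with hv
          set w := I.orderEmbOfFin hI u with hw
          have hvI : v ∈ I := I.orderEmbOfFin_mem hI t
          have hwI : w ∈ I := I.orderEmbOfFin_mem hI u
          have hvb : v ≠ b := fun h => hbI (h ▸ hvI)
          have hwb : w ≠ b := fun h => hbI (h ▸ hwI)
          rcases eq_or_ne v a with hva | hva <;> rcases eq_or_ne w a with hwa | hwa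
          · exact absurd (hva ▸ hwa ▸ hvw) (lt_irrefl _)
          · rw [hva, Equiv.swap_apply_right, Equiv.swap_apply_of_ne_of_ne hwb hwa]
            have h1 : (a : ℕ) < (w : ℕ) := Fin.lt_def.mp (hva ▸ hvw)
            exact Fin.lt_def.mpr (by omega)
          · rw [hwa, Equiv.swap_apply_right, Equiv.swap_apply_of_ne_of_ne hvb hva]
            have h1 : (v : ℕ) < (a : ℕ) := Fin.lt_def.mp (hwa ▸ hvw)
            have h2 : (v : ℕ) ≠ (b : ℕ) := fun h => hvb (Fin.ext h)
            exact Fin.lt_def.mpr (by omega)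
          · rwa [Equiv.swap_apply_of_ne_of_ne hvb hva, Equiv.swap_apply_of_ne_of_ne hwb hwa]
      have key2 : ∀ s : Fin l,
          Jᶜ.orderEmbOfFin hJ' s = Equiv.swap b a (Iᶜ.orderEmbOfFin hI' s) := by
        have hu := Finset.orderEmbOfFin_unique hJ'
          (f := fun s => Equiv.swap b a (Iᶜ.orderEmbOfFin hI' s)) ?_ ?_
        · exact fun s => (congrFun hu s).symm
        · intro s
          show Equiv.swap b a (Iᶜ.orderEmbOfFin hI' s) ∈ Jᶜ
          have hvI : Iᶜ.orderEmbOfFin hI' s ∉ I :=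
            Finset.mem_compl.mp (Iᶜ.orderEmbOfFin_mem hI' s)
          by_cases hvb : Iᶜ.orderEmbOfFin hI' s = b
          · rw [hvb, Equiv.swap_apply_left]
            simp only [Finset.mem_compl, hJdef, Finset.mem_insert, Finset.mem_erase]
            push_neg
            exact ⟨Ne.symm hab, fun h => absurd rfl h⟩
          · have hva : Iᶜ.orderEmbOfFin hI' s ≠ a := fun h => hvI (h ▸ haI)
            rw [Equiv.swap_apply_of_ne_of_ne hvb hva]
            simp only [Finset.mem_compl, hJdef, Finset.mem_insert, Finset.mem_erase]
            push_neg
            exact ⟨hvb, fun _ => hvI⟩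
        · intro t u htu
          show Equiv.swap b a (Iᶜ.orderEmbOfFin hI' t) < Equiv.swap b a (Iᶜ.orderEmbOfFin hI' u)
          have hvw : Iᶜ.orderEmbOfFin hI' t < Iᶜ.orderEmbOfFin hI' u :=
            (Iᶜ.orderEmbOfFin hI').strictMono htu
          set v := Iᶜ.orderEmbOfFin hI' t with hv
          set w := Iᶜ.orderEmbOfFin hI' u with hw
          have hvI : v ∉ I := Finset.mem_compl.mp (Iᶜ.orderEmbOfFin_mem hI' t)
          have hwI : w ∉ I := Finset.mem_compl.mp (Iᶜ.orderEmbOfFin_mem hI' u)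
          have hva : v ≠ a := fun h => hvI (h ▸ haI)
          have hwa : w ≠ a := fun h => hwI (h ▸ haI)
          rcases eq_or_ne v b with hvb | hvb <;> rcases eq_or_ne w b with hwb | hwb
          · exact absurd (hvb ▸ hwb ▸ hvw) (lt_irrefl _)
          · rw [hvb, Equiv.swap_apply_left, Equiv.swap_apply_of_ne_of_ne hwb hwa]
            have h1 : (b : ℕ) < (w : ℕ) := Fin.lt_def.mp (hvb ▸ hvw)
            have h2 : (w : ℕ) ≠ (a : ℕ) := fun h => hwa (Fin.ext h)
            exact Fin.lt_def.mpr (by omega)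
          · rw [hwb, Equiv.swap_apply_left, Equiv.swap_apply_of_ne_of_ne hvb hva]
            have h1 : (v : ℕ) < (b : ℕ) := Fin.lt_def.mp (hwb ▸ hvw)
            exact Fin.lt_def.mpr (by omega)
          · rwa [Equiv.swap_apply_of_ne_of_ne hvb hva, Equiv.swap_apply_of_ne_of_ne hwb hwa]
      have hd : dAux J hJcard hJ' = (dAux I hI hI').trans (Equiv.swap b a) := by
        apply Equiv.ext
        rintro (t | s)
        · rw [dAux_inl, key1 t, Equiv.trans_apply, dAux_inl]
        · rw [dAux_inr, key2 s, Equiv.trans_apply, dAux_inr]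
      have hsep : sepPerm hn J hJcard hJ' = (Equiv.swap b a).trans (sepPerm hn I hI hI') := by
        apply Equiv.ext
        intro x
        simp [sepPerm, hd, Equiv.symm_swap]
      have hmul : sepPerm hn J hJcard hJ' = sepPerm hn I hI hI' * Equiv.swap b a := hsep
      have hsum1 : (∑ x ∈ I.erase a, (x : ℕ)) + (a : ℕ) = ∑ x ∈ I, (x : ℕ) :=
        Finset.sum_erase_add I _ haI
      have hsumJ : (∑ i ∈ J, (i : ℕ)) = m - 1 := by
        rw [hJdef, Finset.sum_insert hbJ]
        omega
      have hm1 : 1 ≤ m := by omega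
      have IHJ := IH (m - 1) (by omega) J hJcard hJ' hsumJ
      rw [hmul, Equiv.Perm.sign_mul, Equiv.Perm.sign_swap hab, mul_neg_one] at IHJ
      rw [show m + k * (k - 1) / 2 = (m - 1 + k * (k - 1) / 2) + 1 from by omega, pow_succ,
        ← IHJ, mul_neg_one, neg_neg]
    · push_neg at hex
      have hkn : k ≤ n := by omega
      have hdown : ∀ a : Fin n, a ∈ I → ∀ c : ℕ, c ≤ (a : ℕ) →
          (⟨(a : ℕ) - c, by omega⟩ : Fin n) ∈ I := by
        intro a ha c
        induction c with
        | zero => intro _; simpa using ha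
        | succ c ih =>
          intro hc
          have h1 := ih (by omega)
          have h2 := hex _ h1 ⟨(a : ℕ) - (c + 1), by omega⟩ (by simp; omega)
          exact h2
      have hIeq : I = univ.filter (fun x : Fin n => (x : ℕ) < k) := by
        apply Finset.eq_of_subset_of_card_le
        · intro a ha
          simp only [mem_filter, mem_univ, true_and]
          by_contra hak
          push_neg at hak
          have hsub : univ.filter (fun x : Fin n => (x : ℕ) ≤ (a : ℕ)) ⊆ I := by
            intro x hx
            simp only [mem_filter, mem_univ, true_and] at hx
            have h := hdown a ha ((a : ℕ) - (x : ℕ)) (by omega)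
            have hx2 : (⟨(a : ℕ) - ((a : ℕ) - (x : ℕ)), by omega⟩ : Fin n) = x :=
              Fin.ext (by simp; omega)
            rwa [hx2] at h
          have hca : (univ.filter (fun x : Fin n => (x : ℕ) ≤ (a : ℕ))).card = (a : ℕ) + 1 := by
            rw [Finset.filter_congr (q := fun x : Fin n => (x : ℕ) < (a : ℕ) + 1)
              (fun x _ => by constructor <;> omega)]
            exact card_filter_lt _ (by omega)
          have := Finset.card_le_card hsub
          rw [hca, hI] at this
          omega
        · rw [card_filter_lt k hkn, hI]
      have hm0 : m = k * (k - 1) / 2 := by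
        rw [← hm, hIeq, sum_filter_lt k hkn]
      have hdI : dAux I hI hI' = eAux hn := by
        apply Equiv.ext
        rintro (t | s)
        · rw [dAux_inl]
          have hu := Finset.orderEmbOfFin_unique hI
            (f := fun t : Fin k => (⟨(t : ℕ), Nat.lt_of_lt_of_le t.2 hkn⟩ : Fin n)) ?_ ?_
          · refine Fin.ext ?_
            rw [eAux_inl]
            exact congrArg Fin.val (congrFun hu t).symm
          · intro x
            exact (le_of_eq hIeq.symm) (mem_filter.mpr ⟨mem_univ _, x.2⟩)
          · intro x y hxy
            exact Fin.mk_lt_mk.mpr (Fin.lt_def.mp hxy)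
        · rw [dAux_inr]
          have hu := Finset.orderEmbOfFin_unique hI'
            (f := fun s : Fin l => (⟨k + (s : ℕ), hn ▸ Nat.add_lt_add_left s.2 k⟩ : Fin n)) ?_ ?_
          · refine Fin.ext ?_
            rw [eAux_inr]
            exact congrArg Fin.val (congrFun hu s).symm
          · intro x
            refine Finset.mem_compl.mpr (fun hmem => ?_)
            have h2 := (le_of_eq hIeq) hmem
            simp only [mem_filter, mem_univ, true_and] at h2
            omega
          · intro x y hxy
            have h := Fin.lt_def.mp hxy
            exact Fin.mk_lt_mk.mpr (by omega)
      have h1 : sepPerm hn I hI hI' = Equiv.refl (Fin n) := by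
        rw [sepPerm, hdI, Equiv.symm_trans_self]
      rw [h1, hm0, ← two_mul]
      have : Equiv.Perm.sign (Equiv.refl (Fin n)) = 1 := Equiv.Perm.sign_refl
      rw [this, (even_two_mul _).neg_one_pow]



lemma compl_card (hn : k + l = n) {I : Finset (Fin n)} (hI : I.card = k) : Iᶜ.card = l := by
  have := Finset.card_add_card_compl I
  simp only [Fintype.card_fin] at this
  omega

/-- The permutation associated to the data `(I, π₁, π₂)`. -/
noncomputable def permOf (hn : k + l = n) (I : Finset (Fin n)) (hI : I.card = k)
    (hI' : Iᶜ.card = l) (π₁ : Equiv.Perm (Fin k)) (π₂ : Equiv.Perm (Fin l)) :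
    Equiv.Perm (Fin n) :=
  (sepPerm hn I hI hI').trans
    (((eAux hn).symm.trans (Equiv.sumCongr π₁ π₂)).trans (eAux hn))

lemma permOf_mem (hn : k + l = n) (I : Finset (Fin n)) (hI : I.card = k)
    (hI' : Iᶜ.card = l) (π₁ : Equiv.Perm (Fin k)) (π₂ : Equiv.Perm (Fin l)) (t : Fin k) :
    permOf hn I hI hI' π₁ π₂ (I.orderEmbOfFin hI t) = eAux hn (Sum.inl (π₁ t)) := by
  simp only [permOf, Equiv.trans_apply, sepPerm_apply_mem hn I hI hI' t,
    Equiv.symm_apply_apply, Equiv.sumCongr_apply, Sum.map_inl]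

lemma permOf_not_mem (hn : k + l = n) (I : Finset (Fin n)) (hI : I.card = k)
    (hI' : Iᶜ.card = l) (π₁ : Equiv.Perm (Fin k)) (π₂ : Equiv.Perm (Fin l)) (s : Fin l) :
    permOf hn I hI hI' π₁ π₂ (Iᶜ.orderEmbOfFin hI' s) = eAux hn (Sum.inr (π₂ s)) := by
  simp only [permOf, Equiv.trans_apply, sepPerm_apply_not_mem hn I hI hI' s,
    Equiv.symm_apply_apply, Equiv.sumCongr_apply, Sum.map_inr]

lemma sign_permOf (hn : k + l = n) (I : Finset (Fin n)) (hI : I.card = k)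
    (hI' : Iᶜ.card = l) (π₁ : Equiv.Perm (Fin k)) (π₂ : Equiv.Perm (Fin l)) :
    Equiv.Perm.sign (permOf hn I hI hI' π₁ π₂) =
      (-1) ^ ((∑ i ∈ I, (i : ℕ)) + k * (k - 1) / 2) *
        (Equiv.Perm.sign π₁ * Equiv.Perm.sign π₂) := by
  have h1 : permOf hn I hI hI' π₁ π₂ =
      (((eAux hn).symm.trans (Equiv.sumCongr π₁ π₂)).trans (eAux hn)) * sepPerm hn I hI hI' :=
    rfl
  rw [h1, Equiv.Perm.sign_mul, Equiv.Perm.sign_symm_trans_trans, Equiv.Perm.sign_sumCongr,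
    sign_sepPerm hn _ I hI hI' rfl]
  exact mul_comm _ _

/-- A totalized version of `permOf`. -/
noncomputable def permOf' (hn : k + l = n) (I : Finset (Fin n))
    (π₁ : Equiv.Perm (Fin k)) (π₂ : Equiv.Perm (Fin l)) : Equiv.Perm (Fin n) :=
  if h : I.card = k ∧ Iᶜ.card = l then permOf hn I h.1 h.2 π₁ π₂ else 1

lemma permOf'_eq (hn : k + l = n) (I : Finset (Fin n)) (hI : I.card = k)
    (hI' : Iᶜ.card = l) (π₁ : Equiv.Perm (Fin k)) (π₂ : Equiv.Perm (Fin l)) :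
    permOf' hn I π₁ π₂ = permOf hn I hI hI' π₁ π₂ := dif_pos ⟨hI, hI'⟩

/-- Generalized Laplace expansion along the first `k` rows. -/
lemma laplace {F : Type*} [Field F] (hn : k + l = n)
    (AU : Matrix (Fin k) (Fin n) F) (AX : Matrix (Fin l) (Fin n) F) :
    ∑ I ∈ (Finset.univ.powersetCard k : Finset (Finset (Fin n))),
        (-1 : F) ^ ((∑ i ∈ I, (i : ℕ)) + k * (k - 1) / 2) * (minor AU I * minor AX Iᶜ)
      = ((fromRows AU AX).submatrix (fun x => (eAux hn).symm x) id).det := by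
  classical
  set M := ((fromRows AU AX).submatrix (fun x => (eAux hn).symm x) id) with hM
  -- termwise: each summand is a sum over pairs of permutations
  have hterm : ∀ I ∈ (Finset.univ.powersetCard k : Finset (Finset (Fin n))),
      (-1 : F) ^ ((∑ i ∈ I, (i : ℕ)) + k * (k - 1) / 2) * (minor AU I * minor AX Iᶜ)
        = ∑ p : Equiv.Perm (Fin k) × Equiv.Perm (Fin l),
            ((Equiv.Perm.sign (permOf' hn I p.1 p.2) : ℤ) : F) *
              ∏ j, M (permOf' hn I p.1 p.2 j) j := by
    intro I hImem
    have hI : I.card = k := Finset.mem_powersetCard_univ.mp hImem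
    have hI' : Iᶜ.card = l := compl_card hn hI
    have hmu : minor AU I
        = ∑ π₁ : Equiv.Perm (Fin k), ((Equiv.Perm.sign π₁ : ℤ) : F) *
            ∏ t, AU (π₁ t) (I.orderEmbOfFin hI t) := by
      rw [minor, dif_pos hI, Matrix.det_apply']
      exact Finset.sum_congr rfl fun π₁ _ => rfl
    have hmx : minor AX Iᶜ
        = ∑ π₂ : Equiv.Perm (Fin l), ((Equiv.Perm.sign π₂ : ℤ) : F) *
            ∏ s, AX (π₂ s) (Iᶜ.orderEmbOfFin hI' s) := by
      rw [minor, dif_pos hI', Matrix.det_apply']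
      exact Finset.sum_congr rfl fun π₂ _ => rfl
    have hprod : ∀ (π₁ : Equiv.Perm (Fin k)) (π₂ : Equiv.Perm (Fin l)),
        (∏ j, M (permOf hn I hI hI' π₁ π₂ j) j)
        = (∏ t, AU (π₁ t) (I.orderEmbOfFin hI t)) *
          ∏ s, AX (π₂ s) (Iᶜ.orderEmbOfFin hI' s) := by
      intro π₁ π₂
      rw [← Equiv.prod_comp (dAux I hI hI') (fun j => M (permOf hn I hI hI' π₁ π₂ j) j),
        Fintype.prod_sum_type]
      congr 1
      · refine Finset.prod_congr rfl fun t _ => ?_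
        rw [dAux_inl I hI hI' t, permOf_mem hn I hI hI' π₁ π₂ t]
        show (fromRows AU AX) ((eAux hn).symm (eAux hn (Sum.inl (π₁ t)))) _ = _
        rw [Equiv.symm_apply_apply, Matrix.fromRows_apply_inl]
        rfl
      · refine Finset.prod_congr rfl fun s _ => ?_
        rw [dAux_inr I hI hI' s, permOf_not_mem hn I hI hI' π₁ π₂ s]
        show (fromRows AU AX) ((eAux hn).symm (eAux hn (Sum.inr (π₂ s)))) _ = _
        rw [Equiv.symm_apply_apply, Matrix.fromRows_apply_inr]
        rfl
    refine Eq.symm ?_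
    rw [Fintype.sum_prod_type]
    dsimp only
    rw [hmu, hmx, Finset.sum_mul_sum, Finset.mul_sum]
    refine Finset.sum_congr rfl fun π₁ _ => ?_
    rw [Finset.mul_sum]
    refine Finset.sum_congr rfl fun π₂ _ => ?_
    rw [permOf'_eq hn I hI hI', hprod π₁ π₂, sign_permOf hn I hI hI' π₁ π₂]
    push_cast
    ring
  rw [Finset.sum_congr rfl hterm, Matrix.det_apply', Finset.sum_sigma']
  refine Finset.sum_bij (fun x _ => permOf' hn x.1 x.2.1 x.2.2) (fun _ _ => Finset.mem_univ _)
    ?_ ?_ ?_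
  · -- injectivity
    rintro ⟨I, π₁, π₂⟩ hx1 ⟨J, ρ₁, ρ₂⟩ hx2 heq
    simp only [Finset.mem_sigma, Finset.mem_powersetCard_univ] at hx1 hx2
    have hI : I.card = k := hx1.1
    have hJ : J.card = k := hx2.1
    have hI' : Iᶜ.card = l := compl_card hn hI
    have hJ' : Jᶜ.card = l := compl_card hn hJ
    replace heq : permOf' hn I π₁ π₂ = permOf' hn J ρ₁ ρ₂ := heq
    rw [permOf'_eq hn I hI hI', permOf'_eq hn J hJ hJ'] at heq
    -- membership characterization
    have hmemchar : ∀ (K : Finset (Fin n)) (hK : K.card = k) (hK' : Kᶜ.card = l)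
        (σ₁ : Equiv.Perm (Fin k)) (σ₂ : Equiv.Perm (Fin l)) (x : Fin n),
        x ∈ K ↔ ((eAux hn).symm (permOf hn K hK hK' σ₁ σ₂ x)).isLeft := by
      intro K hK hK' σ₁ σ₂ x
      constructor
      · intro hx
        have : x ∈ Set.range (K.orderEmbOfFin hK) := by
          rw [Finset.range_orderEmbOfFin]; exact hx
        obtain ⟨t, rfl⟩ := this
        rw [permOf_mem hn K hK hK' σ₁ σ₂ t, Equiv.symm_apply_apply]
        rfl
      · intro hx
        by_contra hxK
        have : x ∈ Set.range (Kᶜ.orderEmbOfFin hK') := by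
          rw [Finset.range_orderEmbOfFin]; exact Finset.mem_compl.mpr hxK
        obtain ⟨s, hs⟩ := this
        rw [← hs, permOf_not_mem hn K hK hK' σ₁ σ₂ s, Equiv.symm_apply_apply] at hx
        simp at hx
    have hIJ : I = J := by
      ext x
      rw [hmemchar I hI hI' π₁ π₂ x, hmemchar J hJ hJ' ρ₁ ρ₂ x, heq]
    subst hIJ
    have hpi1 : π₁ = ρ₁ := by
      apply Equiv.ext
      intro t
      have h1 := permOf_mem hn I hI hI' π₁ π₂ t
      have h2 := permOf_mem hn I hJ hI' ρ₁ ρ₂ t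
      rw [show I.orderEmbOfFin hJ t = I.orderEmbOfFin hI t from rfl] at h2
      rw [heq] at h1
      have := h1.symm.trans h2
      exact Sum.inl_injective ((eAux hn).injective this)
    have hpi2 : π₂ = ρ₂ := by
      apply Equiv.ext
      intro s
      have h1 := permOf_not_mem hn I hI hI' π₁ π₂ s
      have h2 := permOf_not_mem hn I hJ hJ' ρ₁ ρ₂ s
      rw [show Iᶜ.orderEmbOfFin hJ' s = Iᶜ.orderEmbOfFin hI' s from rfl] at h2
      rw [heq] at h1
      have := h1.symm.trans h2
      exact Sum.inr_injective ((eAux hn).injective this)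
    rw [hpi1, hpi2]
  · -- surjectivity
    intro σ _
    set I : Finset (Fin n) := univ.filter (fun x => ((eAux hn).symm (σ x)).isLeft) with hIdef
    have hIim : I = (univ : Finset (Fin k)).image (fun t => σ.symm (eAux hn (Sum.inl t))) := by
      ext x
      simp only [hIdef, mem_filter, mem_univ, true_and, mem_image]
      constructor
      · intro hx
        rw [Sum.isLeft_iff] at hx
        obtain ⟨t, ht⟩ := hx
        exact ⟨t, by rw [← ht, Equiv.apply_symm_apply, Equiv.symm_apply_apply]⟩
      · rintro ⟨t, rfl⟩
        rw [Equiv.apply_symm_apply, Equiv.symm_apply_apply]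
        rfl
    have hginj : Function.Injective fun t : Fin k => σ.symm (eAux hn (Sum.inl t)) :=
      fun a b h => Sum.inl_injective ((eAux hn).injective (σ.symm.injective h))
    have hI : I.card = k := by
      rw [hIim, Finset.card_image_of_injective _ hginj]
      simp
    have hI' : Iᶜ.card = l := compl_card hn hI
    have hch1 : ∀ t : Fin k, ∃ a, σ (I.orderEmbOfFin hI t) = eAux hn (Sum.inl a) := by
      intro t
      have hmem : I.orderEmbOfFin hI t ∈ I := I.orderEmbOfFin_mem hI t
      have h2 : ((eAux hn).symm (σ (I.orderEmbOfFin hI t))).isLeft := (mem_filter.mp hmem).2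
      rw [Sum.isLeft_iff] at h2
      obtain ⟨a, ha⟩ := h2
      exact ⟨a, by rw [← ha, Equiv.apply_symm_apply]⟩
    have hch2 : ∀ s : Fin l, ∃ b, σ (Iᶜ.orderEmbOfFin hI' s) = eAux hn (Sum.inr b) := by
      intro s
      have hmem : Iᶜ.orderEmbOfFin hI' s ∉ I := Finset.mem_compl.mp (Iᶜ.orderEmbOfFin_mem hI' s)
      have h2 : ¬ ((eAux hn).symm (σ (Iᶜ.orderEmbOfFin hI' s))).isLeft :=
        fun hL => hmem (mem_filter.mpr ⟨mem_univ _, hL⟩)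
      rw [Sum.not_isLeft, Sum.isRight_iff] at h2
      obtain ⟨b, hb⟩ := h2
      exact ⟨b, by rw [← hb, Equiv.apply_symm_apply]⟩
    have hp1inj : Function.Injective (fun t => (hch1 t).choose) := by
      intro t u h
      simp only at h
      have h1 := (hch1 t).choose_spec
      have h2 := (hch1 u).choose_spec
      rw [h] at h1
      have := σ.injective (h1.trans h2.symm)
      exact (I.orderEmbOfFin hI).injective this
    have hp2inj : Function.Injective (fun s => (hch2 s).choose) := by
      intro t u h
      simp only at h
      have h1 := (hch2 t).choose_spec
      have h2 := (hch2 u).choose_spec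
      rw [h] at h1
      have := σ.injective (h1.trans h2.symm)
      exact (Iᶜ.orderEmbOfFin hI').injective this
    set π₁ : Equiv.Perm (Fin k) :=
      Equiv.ofBijective _ (Finite.injective_iff_bijective.mp hp1inj) with hπ₁
    set π₂ : Equiv.Perm (Fin l) :=
      Equiv.ofBijective _ (Finite.injective_iff_bijective.mp hp2inj) with hπ₂
    refine ⟨⟨I, π₁, π₂⟩, ?_, ?_⟩
    · simp only [Finset.mem_sigma, Finset.mem_powersetCard_univ]
      exact ⟨hI, Finset.mem_univ _⟩
    · show permOf' hn I π₁ π₂ = σ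
      rw [permOf'_eq hn I hI hI']
      apply Equiv.ext
      intro x
      by_cases hx : x ∈ I
      · have : x ∈ Set.range (I.orderEmbOfFin hI) := by
          rw [Finset.range_orderEmbOfFin]; exact hx
        obtain ⟨t, rfl⟩ := this
        rw [permOf_mem hn I hI hI' π₁ π₂ t, (hch1 t).choose_spec]
        rfl
      · have : x ∈ Set.range (Iᶜ.orderEmbOfFin hI') := by
          rw [Finset.range_orderEmbOfFin]; exact Finset.mem_compl.mpr hx
        obtain ⟨s, rfl⟩ := this
        rw [permOf_not_mem hn I hI hI' π₁ π₂ s, (hch2 s).choose_spec]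
        rfl
  · rintro ⟨I, π₁, π₂⟩ _
    rfl


end Stmt11Aux

/-- `F^n = U ⊕ X` iff `∑_I a_I(X) Δ_I(A_U) ≠ 0`, where
`a_I(X) = (−1)^{k(k+1)/2 + Σ_{i∈I} i} Δ_{[n]∖I}(A_X)` (indices written `1`-based). -/
theorem stmt11 {F : Type*} [Field F] {n k : ℕ} (hk : 0 < k) (hkn : k < n)
    (U X : Submodule F (Fin n → F))
    (hUdim : Module.finrank F U = k) (hXdim : Module.finrank F X = n - k)
    (AU : Matrix (Fin k) (Fin n) F) (AX : Matrix (Fin (n - k)) (Fin n) F)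
    (hAU : Submodule.span F (Set.range AU) = U)
    (hAX : Submodule.span F (Set.range AX) = X) :
    IsCompl U X ↔
      ∑ I ∈ (Finset.univ.powersetCard k : Finset (Finset (Fin n))),
        ((-1 : F) ^ (k * (k + 1) / 2 + ∑ i ∈ I, ((i : ℕ) + 1)) * minor AX Iᶜ) * minor AU I
        ≠ 0 := by
  classical
  have hn : k + (n - k) = n := by omega
  set M : Matrix (Fin n) (Fin n) F :=
    (fromRows AU AX).submatrix (fun x => (Stmt11Aux.eAux hn).symm x) id with hMdef
  have hlap := Stmt11Aux.laplace hn AU AX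
  have hexp : ∀ I ∈ (Finset.univ.powersetCard k : Finset (Finset (Fin n))),
      ((-1 : F) ^ (k * (k + 1) / 2 + ∑ i ∈ I, ((i : ℕ) + 1)) * minor AX Iᶜ) * minor AU I
      = (-1 : F) ^ ((∑ i ∈ I, (i : ℕ)) + k * (k - 1) / 2) * (minor AU I * minor AX Iᶜ) := by
    intro I hImem
    have hIc : I.card = k := Finset.mem_powersetCard_univ.mp hImem
    have h1 : ∑ i ∈ I, ((i : ℕ) + 1) = (∑ i ∈ I, (i : ℕ)) + k := by
      rw [Finset.sum_add_distrib, Finset.sum_const, hIc, smul_eq_mul, mul_one]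
    have hA : ∑ i ∈ Finset.range (k + 1), i = (k + 1) * k / 2 := by
      simpa using Finset.sum_range_id (k + 1)
    have hB : ∑ i ∈ Finset.range k, i = k * (k - 1) / 2 := Finset.sum_range_id k
    have hC : ∑ i ∈ Finset.range (k + 1), i = (∑ i ∈ Finset.range k, i) + k :=
      Finset.sum_range_succ _ k
    have h2 : k * (k + 1) / 2 = k * (k - 1) / 2 + k := by
      rw [Nat.mul_comm k (k + 1), ← hA, hC, hB]
    rw [h1, show k * (k + 1) / 2 + ((∑ i ∈ I, (i : ℕ)) + k)
      = ((∑ i ∈ I, (i : ℕ)) + k * (k - 1) / 2) + 2 * k from by omega]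
    rw [pow_add, pow_mul, neg_one_sq, one_pow, mul_one]
    ring
  rw [Finset.sum_congr rfl hexp, hlap]
  have hrange : Submodule.span F (Set.range M) = U ⊔ X := by
    have h1 : Set.range M = Set.range (fromRows AU AX) :=
      Function.Surjective.range_comp (Equiv.surjective _) (fromRows AU AX)
    have h2 : Set.range (fromRows AU AX) = Set.range AU ∪ Set.range AX :=
      Set.Sum.elim_range AU AX
    rw [h1, h2, Submodule.span_union, hAU, hAX]
  have hcoe : ⇑M.vecMulLinear = M.vecMul := rfl
  have hdetspan : M.det ≠ 0 ↔ Submodule.span F (Set.range M) = ⊤ := by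
    rw [← isUnit_iff_ne_zero, ← Matrix.isUnit_iff_isUnit_det,
      ← Matrix.vecMul_surjective_iff_isUnit, ← hcoe, ← LinearMap.range_eq_top,
      range_vecMulLinear]
    exact Iff.rfl
  rw [hdetspan, hrange]
  constructor
  · exact fun h => h.codisjoint.eq_top
  · intro htop
    have hdim := Submodule.finrank_sup_add_finrank_inf_eq U X
    rw [htop, hUdim, hXdim, finrank_top, Module.finrank_fin_fun] at hdim
    have hinf : Module.finrank F ↥(U ⊓ X) = 0 := by omega
    have hbot : U ⊓ X = ⊥ := Submodule.finrank_eq_zero.mp hinf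
    exact ⟨disjoint_iff.mpr hbot, codisjoint_iff.mpr htop⟩
end

section
/- Let 𝔐_1 and 𝔐_2 be matroids on the same ground set [m] with the same rank k, such that every independent set of 𝔐_2 is independent in 𝔐_1. Then every broken circuit of 𝔐_1 contains a broken circuit of 𝔐_2 (with respect to a common fixed linear order on [m]). -/
/-- A circuit of a matroid: a minimal dependent set (given here as a finite set, for a
matroid whose ground set is the whole type). -/
def IsCircuitOf {α : Type*} (M : Matroid α) (C : Finset α) : Prop :=
  ¬ M.Indep ↑C ∧ ∀ D : Finset α, D ⊂ C → M.Indep ↑D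

/-- A broken circuit: a circuit with its maximal element (in the fixed linear order)
removed. -/
def IsBrokenCircuitOf {α : Type*} [LinearOrder α] (M : Matroid α) (B : Finset α) : Prop :=
  ∃ (C : Finset α) (hC : C.Nonempty), IsCircuitOf M C ∧ B = C.erase (C.max' hC)


lemma exists_circuit_subset {α : Type*} (M : Matroid α) :
    ∀ C : Finset α, ¬ M.Indep ↑C → ∃ C' : Finset α, C' ⊆ C ∧ IsCircuitOf M C' := by
  intro C
  induction C using Finset.strongInduction with
  | _ C ih =>
    intro hC
    by_cases h : ∀ D : Finset α, D ⊂ C → M.Indep ↑D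
    · exact ⟨C, subset_rfl, hC, h⟩
    · push_neg at h
      obtain ⟨D, hD, hDdep⟩ := h
      obtain ⟨C', hsub, hC'⟩ := ih D hD hDdep
      exact ⟨C', hsub.trans hD.subset, hC'⟩

/-- If `𝔐₁, 𝔐₂` are rank-`k` matroids on `[m]` and every independent set
of `𝔐₂` is independent in `𝔐₁`, then every broken circuit of `𝔐₁` contains a broken circuit
of `𝔐₂`. -/
theorem stmt14 {m k : ℕ} (M₁ M₂ : Matroid (Fin m))
    (hE₁ : M₁.E = Set.univ) (hE₂ : M₂.E = Set.univ)
    (hrk₁ : ∀ B : Set (Fin m), M₁.IsBase B → B.ncard = k)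
    (hrk₂ : ∀ B : Set (Fin m), M₂.IsBase B → B.ncard = k)
    (hind : ∀ S : Set (Fin m), M₂.Indep S → M₁.Indep S)
    (B : Finset (Fin m)) (hB : IsBrokenCircuitOf M₁ B) :
    ∃ B' : Finset (Fin m), IsBrokenCircuitOf M₂ B' ∧ B' ⊆ B := by
  obtain ⟨C, hCne, ⟨hdep, hmin⟩, hBeq⟩ := hB
  have hdep2 : ¬ M₂.Indep ↑C := fun h => hdep (hind _ h)
  obtain ⟨C', hsub, hC'⟩ := exists_circuit_subset M₂ C hdep2
  have hC'ne : C'.Nonempty := by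
    rcases C'.eq_empty_or_nonempty with h | h
    · exfalso; apply hC'.1; rw [h]; simp [M₂.empty_indep]
    · exact h
  refine ⟨C'.erase (C'.max' hC'ne), ⟨C', hC'ne, hC', by congr!⟩, ?_⟩
  subst hBeq
  intro x hx
  have hxC' : x ∈ C' := Finset.mem_of_mem_erase (by simpa using hx)
  have hxC : x ∈ C := hsub hxC'
  simp only [Finset.mem_erase] at hx ⊢
  refine ⟨?_, hxC⟩
  intro hxeq
  have h1 : x ≤ C'.max' hC'ne := Finset.le_max' _ _ hxC'
  have h2 : C'.max' hC'ne ≤ x := by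
    rw [hxeq]; exact Finset.le_max' _ _ (hsub (C'.max'_mem hC'ne))
  exact hx.1 (le_antisymm h1 h2)
end
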